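/- arXiv:2303.05805 — 5 statements merged into one kernel-verified Lean document; each statement's English description precedes it below -/
import Mathlib

section
/- Let t01, t02, t03, t12, t13, t23 be the six edge tangent vectors of a non-degenerate tetrahedron in R^3 (i.e., t_{ij} = x_j - x_i for vertices x_0, x_1, x_2, x_3 in general position). Then the six rank-one symmetric matrices T_{ij} = t_{ij} t_{ij}^T form a basis of the 6-dimensional space of 3x3 real symmetric matrices. -/
open Matrix

/-- The submodule of symmetric 3×3 real matrices. -/
def sym3 : Submodule ℝ (Matrix (Fin 3) (Fin 3) ℝ) where
  carrier := {A | A.IsSymm}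
  add_mem' := fun ha hb => ha.add hb
  zero_mem' := by simp [Matrix.IsSymm]
  smul_mem' := fun c A hA => hA.smul c

section aux

/-- conjugation identity for rank one matrices -/
lemma vecMulVec_mulVec_aux (M : Matrix (Fin 3) (Fin 3) ℝ) (a b : Fin 3 → ℝ) :
    vecMulVec (M.mulVec a) (M.mulVec b) = M * vecMulVec a b * Mᵀ := by
  ext i j
  simp [vecMulVec_apply, Matrix.mul_apply, Matrix.mulVec, dotProduct,
    Fin.sum_univ_three, Matrix.transpose_apply]
  ring

/-- the reference vertex positions of the standard tetrahedron -/
def uStd : Fin 4 → Fin 3 → ℝ := ![0, ![1,0,0], ![0,1,0], ![0,0,1]]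

/-- the standard rank-one family -/
def SStd : {p : Fin 4 × Fin 4 // p.1 < p.2} → Matrix (Fin 3) (Fin 3) ℝ :=
  fun p => vecMulVec (uStd p.1.2 - uStd p.1.1) (uStd p.1.2 - uStd p.1.1)

def eIdx : Fin 6 → {p : Fin 4 × Fin 4 // p.1 < p.2} :=
  ![⟨(0,1), by decide⟩, ⟨(0,2), by decide⟩, ⟨(0,3), by decide⟩,
    ⟨(1,2), by decide⟩, ⟨(1,3), by decide⟩, ⟨(2,3), by decide⟩]

lemma eIdx_bij : Function.Bijective eIdx := by decide

lemma eIdx0 : eIdx 0 = ⟨(0,1), by decide⟩ := rfl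
lemma eIdx1 : eIdx 1 = ⟨(0,2), by decide⟩ := rfl
lemma eIdx2 : eIdx 2 = ⟨(0,3), by decide⟩ := rfl
lemma eIdx3 : eIdx 3 = ⟨(1,2), by decide⟩ := rfl
lemma eIdx4 : eIdx 4 = ⟨(1,3), by decide⟩ := rfl
lemma eIdx5 : eIdx 5 = ⟨(2,3), by decide⟩ := rfl

lemma SStd_li : LinearIndependent ℝ SStd := by
  rw [← linearIndependent_equiv (Equiv.ofBijective eIdx eIdx_bij)]
  rw [Fintype.linearIndependent_iff]
  intro g hg
  rw [Fin.sum_univ_six] at hg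
  simp only [Function.comp_apply, Equiv.ofBijective_apply, eIdx0, eIdx1, eIdx2, eIdx3, eIdx4,
    eIdx5] at hg
  have h00 := congrFun (congrFun hg 0) 0
  have h11 := congrFun (congrFun hg 1) 1
  have h22 := congrFun (congrFun hg 2) 2
  have h01 := congrFun (congrFun hg 0) 1
  have h02 := congrFun (congrFun hg 0) 2
  have h12 := congrFun (congrFun hg 1) 2
  simp [SStd, uStd, vecMulVec_apply] at h00 h11 h22 h01 h02 h12
  intro i
  fin_cases i <;> simp <;> linarith

lemma SStd_symm (p : {p : Fin 4 × Fin 4 // p.1 < p.2}) : (SStd p).IsSymm := by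
  unfold Matrix.IsSymm
  ext i j
  simp [SStd, vecMulVec_apply, Matrix.transpose_apply, mul_comm]

lemma SStd_span : Submodule.span ℝ (Set.range SStd) = sym3 := by
  apply le_antisymm
  · rw [Submodule.span_le]
    rintro _ ⟨p, rfl⟩
    exact SStd_symm p
  · intro A hA
    have hA' : Aᵀ = A := hA
    have h10 : A 1 0 = A 0 1 := by rw [show A 1 0 = Aᵀ 0 1 from rfl, hA']
    have h20 : A 2 0 = A 0 2 := by rw [show A 2 0 = Aᵀ 0 2 from rfl, hA']
    have h21 : A 2 1 = A 1 2 := by rw [show A 2 1 = Aᵀ 1 2 from rfl, hA']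
    have hrep : A = (A 0 0 + A 0 1 + A 0 2) • SStd ⟨(0,1), by decide⟩
        + (A 1 1 + A 0 1 + A 1 2) • SStd ⟨(0,2), by decide⟩
        + (A 2 2 + A 0 2 + A 1 2) • SStd ⟨(0,3), by decide⟩
        + (-(A 0 1)) • SStd ⟨(1,2), by decide⟩
        + (-(A 0 2)) • SStd ⟨(1,3), by decide⟩
        + (-(A 1 2)) • SStd ⟨(2,3), by decide⟩ := by
      ext i j
      fin_cases i <;> fin_cases j <;>
        simp [SStd, uStd, vecMulVec_apply, h10, h20, h21] <;> ring
    rw [hrep]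
    have hmem : ∀ p, SStd p ∈ Submodule.span ℝ (Set.range SStd) :=
      fun p => Submodule.subset_span ⟨p, rfl⟩
    exact Submodule.add_mem _ (Submodule.add_mem _ (Submodule.add_mem _
      (Submodule.add_mem _ (Submodule.add_mem _
        (Submodule.smul_mem _ _ (hmem _)) (Submodule.smul_mem _ _ (hmem _)))
        (Submodule.smul_mem _ _ (hmem _))) (Submodule.smul_mem _ _ (hmem _)))
        (Submodule.smul_mem _ _ (hmem _))) (Submodule.smul_mem _ _ (hmem _))

end aux

/-- The six rank-one tensors `T_{ij} = t_{ij} t_{ij}ᵀ` built from the edge tangent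
vectors of a non-degenerate tetrahedron form a basis of the space of symmetric matrices. -/
theorem stmt0 (x : Fin 4 → Fin 3 → ℝ) (hx : AffineIndependent ℝ x)
    (T : {p : Fin 4 × Fin 4 // p.1 < p.2} → Matrix (Fin 3) (Fin 3) ℝ)
    (hT : ∀ p, T p = vecMulVec (x p.1.2 - x p.1.1) (x p.1.2 - x p.1.1)) :
    LinearIndependent ℝ T ∧ Submodule.span ℝ (Set.range T) = sym3 := by
  classical
  set M : Matrix (Fin 3) (Fin 3) ℝ := Matrix.of fun r c => (x c.succ - x 0) r with hMdef
  -- columns of M are linearly independent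
  have hcols : LinearIndependent ℝ (fun c : Fin 3 => Mᵀ c) := by
    have h1 := (affineIndependent_iff_linearIndependent_vsub ℝ x 0).1 hx
    have h2 := h1.comp (fun c : Fin 3 => (⟨c.succ, Fin.succ_ne_zero c⟩ : {i : Fin 4 // i ≠ 0}))
      (fun a b hab => by
        have : a.succ = b.succ := congrArg Subtype.val hab
        exact Fin.succ_injective _ this)
    have heq : (fun c : Fin 3 => Mᵀ c) =
        (fun i : {i : Fin 4 // i ≠ 0} => x ↑i -ᵥ x 0) ∘
          (fun c : Fin 3 => (⟨c.succ, Fin.succ_ne_zero c⟩ : {i : Fin 4 // i ≠ 0})) := by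
      funext c; funext r; simp [hMdef, vsub_eq_sub]
    rw [heq]
    exact h2
  have hMunit : IsUnit M := linearIndependent_cols_iff_isUnit.mp hcols
  have hdet : IsUnit M.det := (Matrix.isUnit_iff_isUnit_det M).mp hMunit
  have hdetT : IsUnit Mᵀ.det := by rwa [Matrix.det_transpose]
  -- relate x-differences to standard differences
  have hxu : ∀ k : Fin 4, x k - x 0 = M.mulVec (uStd k) := by
    intro k
    funext r
    fin_cases k <;> fin_cases r <;>
      simp [hMdef, uStd, Matrix.mulVec, dotProduct, Fin.sum_univ_three,
        show (Fin.succ 0 : Fin 4) = 1 from rfl, show (Fin.succ 1 : Fin 4) = 2 from rfl,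
        show (Fin.succ 2 : Fin 4) = 3 from rfl]
  have ht : ∀ p : {p : Fin 4 × Fin 4 // p.1 < p.2},
      x p.1.2 - x p.1.1 = M.mulVec (uStd p.1.2 - uStd p.1.1) := by
    intro p
    rw [Matrix.mulVec_sub, ← hxu, ← hxu, sub_sub_sub_cancel_right]
  -- conjugation map
  let φ : Matrix (Fin 3) (Fin 3) ℝ →ₗ[ℝ] Matrix (Fin 3) (Fin 3) ℝ :=
    { toFun := fun A => M * A * Mᵀ
      map_add' := fun A B => by noncomm_ring
      map_smul' := fun c A => by
        simp [Matrix.mul_smul, Matrix.smul_mul] }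
  have hTS : ∀ p, T p = φ (SStd p) := by
    intro p
    rw [hT, ht p, vecMulVec_mulVec_aux]
    rfl
  have hTfun : T = φ ∘ SStd := funext hTS
  have hker : LinearMap.ker φ = ⊥ := by
    rw [LinearMap.ker_eq_bot']
    intro A hAker
    have hAker' : M * A * Mᵀ = 0 := hAker
    have := congrArg (fun C => M⁻¹ * C * Mᵀ⁻¹) hAker'
    simpa [Matrix.mul_assoc, Matrix.mul_nonsing_inv _ hdetT,
      Matrix.nonsing_inv_mul_cancel_left _ _ hdet] using this
  have hmap : Submodule.map φ sym3 = sym3 := by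
    apply le_antisymm
    · rintro _ ⟨A, hA, rfl⟩
      have hA' : Aᵀ = A := hA
      show (M * A * Mᵀ).IsSymm
      unfold Matrix.IsSymm
      rw [Matrix.transpose_mul, Matrix.transpose_mul, Matrix.transpose_transpose, hA',
        Matrix.mul_assoc]
    · intro B hB
      have hB' : Bᵀ = B := hB
      refine ⟨M⁻¹ * B * (M⁻¹)ᵀ, ?_, ?_⟩
      · show (M⁻¹ * B * (M⁻¹)ᵀ).IsSymm
        unfold Matrix.IsSymm
        rw [Matrix.transpose_mul, Matrix.transpose_mul, Matrix.transpose_transpose, hB',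
          Matrix.mul_assoc]
      · show M * (M⁻¹ * B * (M⁻¹)ᵀ) * Mᵀ = B
        rw [Matrix.transpose_nonsing_inv, ← Matrix.mul_assoc, ← Matrix.mul_assoc,
          Matrix.mul_nonsing_inv _ hdet, Matrix.one_mul, Matrix.mul_assoc,
          Matrix.nonsing_inv_mul _ hdetT, Matrix.mul_one]
  constructor
  · rw [hTfun]
    exact SStd_li.map' φ hker
  · rw [hTfun, Set.range_comp, Submodule.span_image, SStd_span, hmap]
end

section
/- With the setup of the previous lemma: write l1 = c n2 + a t2 and l2 = c n1 + b t1 (normalizing so that n1, n2, t1, t2 are unit vectors and c = l1^T n2 = l2^T n1). If T = A n1 n1^T + B t1 t1^T + C(n1 t1^T + t1 n1^T) satisfies T n1 = l1 and T n2 = l2, then A = c cos θ + a sin θ, C = -c sin θ + a cos θ, and B = -b/sin θ - c cos θ + a cos^2 θ / sin θ, and consequently A^2 + B^2 + 2C^2 = a^2 + b^2 + c^2 + (c - cot θ (a - b))^2. -/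
open Matrix

lemma vmv_mulVec (u v w : Fin 3 → ℝ) : vecMulVec u v *ᵥ w = (v ⬝ᵥ w) • u := by
  funext i
  simp [mulVec, vecMulVec_apply, dotProduct, Finset.mul_sum, mul_assoc, mul_comm, mul_left_comm]

/-- Coefficient identities for the reconstructed symmetric tensor
`T = A n1n1ᵀ + B t1t1ᵀ + C(n1t1ᵀ + t1n1ᵀ)` with `Tn1 = c n2 + a t2`,
`Tn2 = c n1 + b t1`. -/
theorem stmt4 (θ a b c : ℝ) (hθ : θ ∈ Set.Ioo 0 Real.pi)
    (n1 t1 : Fin 3 → ℝ) (hn1 : n1 ⬝ᵥ n1 = 1) (ht1 : t1 ⬝ᵥ t1 = 1)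
    (ho : n1 ⬝ᵥ t1 = 0)
    (n2 t2 : Fin 3 → ℝ)
    (hn2 : n2 = Real.cos θ • n1 - Real.sin θ • t1)
    (ht2 : t2 = Real.sin θ • n1 + Real.cos θ • t1)
    (A B C : ℝ) (T : Matrix (Fin 3) (Fin 3) ℝ)
    (hT : T = A • vecMulVec n1 n1 + B • vecMulVec t1 t1
        + C • (vecMulVec n1 t1 + vecMulVec t1 n1))
    (h1 : T *ᵥ n1 = c • n2 + a • t2) (h2 : T *ᵥ n2 = c • n1 + b • t1) :
    A = c * Real.cos θ + a * Real.sin θ ∧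
    C = -c * Real.sin θ + a * Real.cos θ ∧
    B = -b / Real.sin θ - c * Real.cos θ + a * Real.cos θ ^ 2 / Real.sin θ ∧
    A ^ 2 + B ^ 2 + 2 * C ^ 2
      = a ^ 2 + b ^ 2 + c ^ 2 + (c - (Real.cos θ / Real.sin θ) * (a - b)) ^ 2 := by
  have hs : Real.sin θ ≠ 0 := ne_of_gt (Real.sin_pos_of_pos_of_lt_pi hθ.1 hθ.2)
  have ho' : t1 ⬝ᵥ n1 = 0 := by rwa [dotProduct_comm]
  have e1 := congrArg (fun v => n1 ⬝ᵥ v) h1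
  have e2 := congrArg (fun v => t1 ⬝ᵥ v) h1
  have e3 := congrArg (fun v => n1 ⬝ᵥ v) h2
  have e4 := congrArg (fun v => t1 ⬝ᵥ v) h2
  simp only [hT, hn2, ht2, add_mulVec, smul_mulVec, vmv_mulVec, mulVec_smul,
    mulVec_sub, dotProduct_add, dotProduct_smul, dotProduct_sub, smul_eq_mul,
    hn1, ht1, ho, ho', mul_one, mul_zero, add_zero, zero_add, mul_comm] at e1 e2 e3 e4
  have hA : A = c * Real.cos θ + a * Real.sin θ := by linarith
  have hC : C = -c * Real.sin θ + a * Real.cos θ := by linarith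
  have hpy := Real.sin_sq_add_cos_sq θ
  have hBs : B * Real.sin θ = C * Real.cos θ - b := by linarith
  have hB : B = -b / Real.sin θ - c * Real.cos θ + a * Real.cos θ ^ 2 / Real.sin θ := by
    field_simp
    linear_combination hBs + Real.cos θ * hC
  refine ⟨hA, hC, hB, ?_⟩
  subst hA hC hB
  have key : ∀ s k : ℝ, s ≠ 0 → s^2 + k^2 = 1 →
      (c*k+a*s)^2 + (-b/s - c*k + a*k^2/s)^2 + 2*(-c*s+a*k)^2
      = a^2+b^2+c^2+(c-(k/s)*(a-b))^2 := by
    intro s k hs0 h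
    field_simp
    linear_combination (2*c^2*s^2 + a^2*(s^2+k^2) - b^2 - 2*a*c*k*s) * h
  have := key (Real.sin θ) (Real.cos θ) hs hpy
  linarith [this]
end

section
/- For real numbers a, b, c and θ with sin θ ≠ 0: a^2 + b^2 + c^2 + (c - cot θ (a - b))^2 ≤ (3/2 + 2 cot^2 θ)(a^2 + b^2 + 2c^2). -/
/-- The key scalar inequality:
`a² + b² + c² + (c - cot θ (a - b))² ≤ (3/2 + 2 cot² θ)(a² + b² + 2c²)`. -/
theorem stmt5 (a b c θ : ℝ) (h : Real.sin θ ≠ 0) :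
    a ^ 2 + b ^ 2 + c ^ 2 + (c - (Real.cos θ / Real.sin θ) * (a - b)) ^ 2
      ≤ (3 / 2 + 2 * (Real.cos θ / Real.sin θ) ^ 2) * (a ^ 2 + b ^ 2 + 2 * c ^ 2) := by
  set t := Real.cos θ / Real.sin θ with ht
  nlinarith [sq_nonneg (2*t*c + (a-b)/2), sq_nonneg (a+b), sq_nonneg (a-b), sq_nonneg (t*(a+b)), sq_nonneg c]
end

section
/- Let m ≥ 3 and let θ_1, ..., θ_m ∈ (0, π) be dihedral angles with Σ θ_j = 2π, and let n_1, ..., n_m, n_{m+1} = n_1 be unit normals of faces arranged cyclically around a common edge, with t_j ⟂ n_j in-plane tangents, satisfying n_{j+1} = cos θ_j n_j - sin θ_j t_j. Suppose T is a family of symmetric 3x3 matrices T_1, ..., T_m (one per sector, with T_{m+1} = T_1) such that T_j n_j = T_{j-1} n_j for all j (normal continuity across interior faces). Then if m is even, Σ_{j=1}^{m} (-1)^j (cot θ_{j-1} + cot θ_j) (n_j^T T_j n_j) = 0 (indices modulo m). -/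
open Matrix

/-- Even-parity constraint: for an even number `m` of sectors around an interior edge,
with normal-continuous piecewise-constant symmetric tensors `T_j`, the alternating sum
`Σ_j (-1)^j (cot θ_{j-1} + cot θ_j) n_jᵀ T_j n_j` vanishes (indices mod `m`). -/
theorem stmt6 (m : ℕ) [NeZero m] (hm : 3 ≤ m) (hme : Even m)
    (θ : Fin m → ℝ) (hθ : ∀ j, θ j ∈ Set.Ioo 0 Real.pi)
    (hsum : ∑ j, θ j = 2 * Real.pi)
    (n t : Fin m → Fin 3 → ℝ)
    (hn : ∀ j, n j ⬝ᵥ n j = 1) (htj : ∀ j, t j ⬝ᵥ t j = 1)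
    (hnt : ∀ j, n j ⬝ᵥ t j = 0)
    (hrot1 : ∀ j, n (j + 1) = Real.cos (θ j) • n j - Real.sin (θ j) • t j)
    (hrot2 : ∀ j, n j = Real.cos (θ j) • n (j + 1) + Real.sin (θ j) • t (j + 1))
    (T : Fin m → Matrix (Fin 3) (Fin 3) ℝ)
    (hTsym : ∀ j, (T j).IsSymm)
    (hTcont : ∀ j, T j *ᵥ n (j + 1) = T (j + 1) *ᵥ n (j + 1)) :
    ∑ j : Fin m, (-1 : ℝ) ^ (j : ℕ) *
        (Real.cos (θ (j - 1)) / Real.sin (θ (j - 1)) + Real.cos (θ j) / Real.sin (θ j)) *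
        (n j ⬝ᵥ (T j *ᵥ n j)) = 0 := by
  obtain ⟨k, rfl⟩ : ∃ k, m = k + 1 := ⟨m - 1, by omega⟩
  set a : Fin (k+1) → ℝ := fun j => n j ⬝ᵥ (T j *ᵥ n j) with ha
  set c : Fin (k+1) → ℝ := fun j => t j ⬝ᵥ (T j *ᵥ n j) with hc
  have hs : ∀ j, Real.sin (θ j) ≠ 0 := fun j =>
    ne_of_gt (Real.sin_pos_of_pos_of_lt_pi (hθ j).1 (hθ j).2)
  -- t_{j+1} in terms of n_j, t_j
  have ht1 : ∀ j, t (j+1) = Real.sin (θ j) • n j + Real.cos (θ j) • t j := by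
    intro j
    have h2 := hrot2 j
    rw [hrot1 j] at h2
    funext i
    have h2i := congrFun h2 i
    simp only [Pi.add_apply, Pi.smul_apply, Pi.sub_apply, smul_eq_mul] at h2i ⊢
    have hpy := Real.sin_sq_add_cos_sq (θ j)
    have hcancel : Real.sin (θ j) * t (j+1) i =
        Real.sin (θ j) * (Real.sin (θ j) * n j i + Real.cos (θ j) * t j i) := by
      linear_combination -h2i - n j i * hpy
    exact mul_left_cancel₀ (hs j) hcancel
  -- symmetry
  have symdot : ∀ j, n j ⬝ᵥ (T j *ᵥ t j) = t j ⬝ᵥ (T j *ᵥ n j) := by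
    intro j
    rw [Matrix.dotProduct_mulVec, ← Matrix.mulVec_transpose, (hTsym j).eq, dotProduct_comm,
      Matrix.dotProduct_mulVec, ← Matrix.mulVec_transpose, (hTsym j).eq, dotProduct_comm]
  -- bilinear expansion
  have expand : ∀ (A : Matrix (Fin 3) (Fin 3) ℝ) (x y : Fin 3 → ℝ) (α β γ δ : ℝ),
      (α • x + β • y) ⬝ᵥ (A *ᵥ (γ • x + δ • y)) =
        α*γ*(x ⬝ᵥ (A *ᵥ x)) + α*δ*(x ⬝ᵥ (A *ᵥ y)) + β*γ*(y ⬝ᵥ (A *ᵥ x)) +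
          β*δ*(y ⬝ᵥ (A *ᵥ y)) := by
    intros A x y α β γ δ
    simp [Matrix.mulVec_add, Matrix.mulVec_smul, dotProduct_add, add_dotProduct,
      smul_dotProduct, dotProduct_smul, smul_eq_mul]
    ring
  -- key identity
  have key : ∀ j, Real.cos (θ j) / Real.sin (θ j) * (a j - a (j+1)) = c (j+1) + c j := by
    intro j
    have hn1 : n (j+1) = Real.cos (θ j) • n j + (-Real.sin (θ j)) • t j := by
      rw [hrot1 j, neg_smul, ← sub_eq_add_neg]
    have ea : a (j+1) =
        Real.cos (θ j)*Real.cos (θ j)*(a j)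
          + Real.cos (θ j)*(-Real.sin (θ j))*(c j)
          + (-Real.sin (θ j))*Real.cos (θ j)*(c j)
          + (-Real.sin (θ j))*(-Real.sin (θ j))*(t j ⬝ᵥ (T j *ᵥ t j)) := by
      show n (j+1) ⬝ᵥ (T (j+1) *ᵥ n (j+1)) = _
      rw [← hTcont j, hn1, expand, symdot]
    have ec : c (j+1) =
        Real.sin (θ j)*Real.cos (θ j)*(a j)
          + Real.sin (θ j)*(-Real.sin (θ j))*(c j)
          + Real.cos (θ j)*Real.cos (θ j)*(c j)
          + Real.cos (θ j)*(-Real.sin (θ j))*(t j ⬝ᵥ (T j *ᵥ t j)) := by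
      show t (j+1) ⬝ᵥ (T (j+1) *ᵥ n (j+1)) = _
      rw [← hTcont j, hn1, ht1 j, expand, symdot]
    rw [ea, ec]
    have hpy := Real.sin_sq_add_cos_sq (θ j)
    rw [div_mul_eq_mul_div, div_eq_iff (hs j)]
    linear_combination (Real.sin (θ j) * c j - Real.cos (θ j) * a j) * hpy
  -- sign lemma
  have hsign : ∀ j : Fin (k+1), ((-1 : ℝ)) ^ (((j+1) : Fin (k+1)) : ℕ) = -(-1 : ℝ) ^ (j : ℕ) := by
    intro j
    rcases eq_or_ne j (Fin.last k) with h | h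
    · subst h
      simp only [Fin.last_add_one, Fin.val_zero, pow_zero, Fin.val_last]
      have : Odd k := by
        rcases hme with ⟨r, hr⟩
        exact ⟨r - 1, by omega⟩
      rw [this.neg_one_pow]; ring
    · rw [Fin.val_add_one_of_lt (Fin.lt_last_iff_ne_last.mpr h), pow_succ]
      ring
  -- reindexing
  have hre : ∀ (f : Fin (k+1) → ℝ), ∑ j, f (j+1) = ∑ j, f j := fun f =>
    Fintype.sum_equiv (Equiv.addRight (1 : Fin (k+1))) _ _ (fun j => rfl)
  -- assemble
  have step1 : ∑ j : Fin (k+1), (-1 : ℝ) ^ (j : ℕ) *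
      (Real.cos (θ (j - 1)) / Real.sin (θ (j - 1)) + Real.cos (θ j) / Real.sin (θ j)) * a j
      = ∑ j : Fin (k+1), ((-1 : ℝ) ^ (j : ℕ) * (Real.cos (θ (j-1)) / Real.sin (θ (j-1))) * a j
          + (-1 : ℝ) ^ (j : ℕ) * (Real.cos (θ j) / Real.sin (θ j)) * a j) := by
    refine Finset.sum_congr rfl fun j _ => by ring
  have step2 : ∑ j : Fin (k+1), (-1 : ℝ) ^ (j : ℕ) *
      (Real.cos (θ (j-1)) / Real.sin (θ (j-1))) * a j
      = ∑ j : Fin (k+1), -((-1 : ℝ) ^ (j : ℕ) * (Real.cos (θ j) / Real.sin (θ j)) * a (j+1)) := by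
    rw [← hre (fun j => (-1 : ℝ) ^ (j : ℕ) * (Real.cos (θ (j-1)) / Real.sin (θ (j-1))) * a j)]
    refine Finset.sum_congr rfl fun j _ => ?_
    rw [hsign j, add_sub_cancel_right]
    ring
  have step3 : ∑ j : Fin (k+1), (-1 : ℝ) ^ (j : ℕ) * c (j+1)
      = -∑ j : Fin (k+1), (-1 : ℝ) ^ (j : ℕ) * c j := by
    rw [← hre (fun j => (-1 : ℝ) ^ (j : ℕ) * c j), ← Finset.sum_neg_distrib]
    refine Finset.sum_congr rfl fun j _ => ?_
    rw [hsign j]; ring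
  calc ∑ j : Fin (k+1), (-1 : ℝ) ^ (j : ℕ) *
        (Real.cos (θ (j - 1)) / Real.sin (θ (j - 1)) + Real.cos (θ j) / Real.sin (θ j)) * a j
      = ∑ j : Fin (k+1), ((-1 : ℝ) ^ (j : ℕ) * (Real.cos (θ (j-1)) / Real.sin (θ (j-1))) * a j
          + (-1 : ℝ) ^ (j : ℕ) * (Real.cos (θ j) / Real.sin (θ j)) * a j) := step1
    _ = ∑ j : Fin (k+1), (-1 : ℝ) ^ (j : ℕ) * (Real.cos (θ (j-1)) / Real.sin (θ (j-1))) * a j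
          + ∑ j : Fin (k+1), (-1 : ℝ) ^ (j : ℕ) * (Real.cos (θ j) / Real.sin (θ j)) * a j :=
        Finset.sum_add_distrib
    _ = ∑ j : Fin (k+1), -((-1 : ℝ) ^ (j : ℕ) * (Real.cos (θ j) / Real.sin (θ j)) * a (j+1))
          + ∑ j : Fin (k+1), (-1 : ℝ) ^ (j : ℕ) * (Real.cos (θ j) / Real.sin (θ j)) * a j := by
        rw [step2]
    _ = ∑ j : Fin (k+1), (-1 : ℝ) ^ (j : ℕ) *
          (Real.cos (θ j) / Real.sin (θ j) * (a j - a (j+1))) := by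
        rw [← Finset.sum_add_distrib]
        refine Finset.sum_congr rfl fun j _ => by ring
    _ = ∑ j : Fin (k+1), (-1 : ℝ) ^ (j : ℕ) * (c (j+1) + c j) := by
        refine Finset.sum_congr rfl fun j _ => by rw [key j]
    _ = ∑ j : Fin (k+1), (-1 : ℝ) ^ (j : ℕ) * c (j+1)
          + ∑ j : Fin (k+1), (-1 : ℝ) ^ (j : ℕ) * c j := by
        rw [← Finset.sum_add_distrib]
        refine Finset.sum_congr rfl fun j _ => by ring
    _ = 0 := by rw [step3]; ring
end

section
/- Moment cancellation: with barycentric coordinates λ_0,...,λ_3 on a tetrahedron and faces F_i = {λ_i = 0}, suppose δ_1 = λ_0 λ_1 (λ_0 - 1/3) T_1, δ_2 = λ_0 λ_2 (λ_0 - 1/3) T_2, δ_3 = λ_0 λ_3 (λ_0 - 1/3) T_3 for symmetric matrices T_1, T_2, T_3 with n_3^T T_2 n_3 ≠ 0 and n_1^T T_3 n_1 ≠ 0 (n_i the unit normal of F_i). Then with r = (n_3^T T_1 n_3)/(n_3^T T_2 n_3) and s = r (n_1^T T_2 n_1)/(n_1^T T_3 n_1), the combination δ = δ_1 - r δ_2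 + s δ_3 satisfies ∫_{F_3} n_3^T δ n_3 · q dS = 0 and ∫_{F_1} n_1^T δ n_1 · q dS = 0 for all affine functions q on those faces, while ∫_{F_2} n_2^T δ n_2 · λ_0 dS = (n_2^T T_1 n_2 + s n_2^T T_3 n_2) |F_2| / 180. -/
open Matrix MeasureTheory
open scoped ENNReal NNReal
open Topology
set_option maxHeartbeats 2000000

noncomputable section

namespace Stmt19Aux

open Set

/-- The standard corner triangle in `ℝ × ℝ`. -/
def Tri : Set (ℝ × ℝ) := {z | 0 ≤ z.1 ∧ 0 ≤ z.2 ∧ z.1 + z.2 ≤ 1}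

lemma isClosed_Tri : IsClosed Tri := by
  have h : Tri = {z : ℝ × ℝ | 0 ≤ z.1} ∩ {z | 0 ≤ z.2} ∩ {z | z.1 + z.2 ≤ 1} := by
    ext z; simp [Tri, and_assoc]
  rw [h]
  exact ((isClosed_le continuous_const continuous_fst).inter
    (isClosed_le continuous_const continuous_snd)).inter
    (isClosed_le (continuous_fst.add continuous_snd) continuous_const)

lemma measurableSet_Tri : MeasurableSet Tri := isClosed_Tri.measurableSet

lemma isCompact_Tri : IsCompact Tri := by
  refine (isCompact_Icc (a := ((0:ℝ), (0:ℝ))) (b := ((1:ℝ), (1:ℝ)))).of_isClosed_subset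
    isClosed_Tri ?_
  rintro ⟨u, v⟩ ⟨h1, h2, h3⟩
  exact ⟨⟨h1, h2⟩, ⟨by dsimp at *; linarith, by dsimp at *; linarith⟩⟩

lemma convex_Tri : Convex ℝ Tri := by
  rintro p ⟨hp1, hp2, hp3⟩ q ⟨hq1, hq2, hq3⟩ a b ha hb hab
  refine ⟨?_, ?_, ?_⟩ <;>
    simp only [Prod.fst_add, Prod.snd_add, Prod.smul_fst, Prod.smul_snd, smul_eq_mul]
  · exact add_nonneg (mul_nonneg ha hp1) (mul_nonneg hb hq1)
  · exact add_nonneg (mul_nonneg ha hp2) (mul_nonneg hb hq2)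
  · nlinarith

lemma Tri_hull :
    convexHull ℝ ({((0:ℝ), (0:ℝ)), ((1:ℝ), (0:ℝ)), ((0:ℝ), (1:ℝ))} : Set (ℝ × ℝ)) = Tri := by
  apply Subset.antisymm
  · apply convexHull_min ?_ convex_Tri
    rintro p hp
    simp only [Set.mem_insert_iff, Set.mem_singleton_iff] at hp
    rcases hp with rfl | rfl | rfl <;> exact ⟨by norm_num, by norm_num, by norm_num⟩
  · rintro p ⟨h1, h2, h3⟩
    have hsum : ∑ i, (![1 - p.1 - p.2, p.1, p.2]) i = 1 := by
      simp [Fin.sum_univ_three]; ring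
    have hmem : (Finset.univ : Finset (Fin 3)).centerMass ![1 - p.1 - p.2, p.1, p.2]
        ![((0:ℝ), (0:ℝ)), ((1:ℝ), (0:ℝ)), ((0:ℝ), (1:ℝ))] ∈
        convexHull ℝ ({((0:ℝ), (0:ℝ)), ((1:ℝ), (0:ℝ)), ((0:ℝ), (1:ℝ))} : Set (ℝ × ℝ)) :=
      Finset.centerMass_mem_convexHull (Finset.univ : Finset (Fin 3))
      (fun i _ => by fin_cases i <;> simp <;> linarith)
      (by rw [hsum]; norm_num)
      (fun i _ => by fin_cases i <;> simp)
    have hcm : (Finset.univ : Finset (Fin 3)).centerMass ![1 - p.1 - p.2, p.1, p.2]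
        ![((0:ℝ), (0:ℝ)), ((1:ℝ), (0:ℝ)), ((0:ℝ), (1:ℝ))] = p := by
      rw [Finset.centerMass, hsum]
      simp [Fin.sum_univ_three, Prod.ext_iff]
    rwa [hcm] at hmem

lemma integral_poly5 (a0 a1 a2 a3 a4 a5 c : ℝ) :
    (∫ v in (0:ℝ)..c, (a0 + a1*v + a2*v^2 + a3*v^3 + a4*v^4 + a5*v^5))
      = a0*c + a1*c^2/2 + a2*c^3/3 + a3*c^4/4 + a4*c^5/5 + a5*c^6/6 := by
  have H : ∀ y : ℝ, HasDerivAt (fun t : ℝ =>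
      a0*t^1 + a1/2*t^2 + a2/3*t^3 + a3/4*t^4 + a4/5*t^5 + a5/6*t^6)
      (a0 + a1*y + a2*y^2 + a3*y^3 + a4*y^4 + a5*y^5) y := by
    intro y
    have h := (((((((hasDerivAt_pow 1 y).const_mul a0).add
      ((hasDerivAt_pow 2 y).const_mul (a1/2))).add
      ((hasDerivAt_pow 3 y).const_mul (a2/3))).add
      ((hasDerivAt_pow 4 y).const_mul (a3/4))).add
      ((hasDerivAt_pow 5 y).const_mul (a4/5))).add
      ((hasDerivAt_pow 6 y).const_mul (a5/6)))
    refine h.congr_deriv ?_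
    push_cast
    ring
  rw [intervalIntegral.integral_eq_sub_of_hasDerivAt (fun y _ => H y)
    ((Continuous.intervalIntegrable (by fun_prop) 0 c))]
  ring

lemma fubTri (g : ℝ × ℝ → ℝ) (hg : Continuous g) :
    (∫ z in Tri, g z) = ∫ u in (0:ℝ)..1, ∫ v in (0:ℝ)..(1-u), g (u, v) := by
  have hint : IntegrableOn g Tri volume := hg.continuousOn.integrableOn_compact isCompact_Tri
  have hind : Integrable (Tri.indicator g) volume := (integrable_indicator_iff measurableSet_Tri).2 hint
  rw [← integral_indicator measurableSet_Tri]
  rw [Measure.volume_eq_prod] at hind ⊢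
  rw [integral_prod _ hind]
  have key : ∀ u : ℝ, (∫ v : ℝ, Tri.indicator g (u, v))
      = (Set.Icc (0:ℝ) 1).indicator (fun u' => ∫ v in (0:ℝ)..(1-u'), g (u', v)) u := by
    intro u
    by_cases hu : u ∈ Set.Icc (0:ℝ) 1
    · rw [Set.indicator_of_mem hu]
      have hsec : ∀ v : ℝ, Tri.indicator g (u, v)
          = (Set.Icc (0:ℝ) (1-u)).indicator (fun v => g (u, v)) v := by
        intro v
        by_cases hv : v ∈ Set.Icc (0:ℝ) (1-u)
        · rw [Set.indicator_of_mem hv, Set.indicator_of_mem]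
          exact ⟨hu.1, hv.1, by have := hv.2; dsimp; linarith⟩
        · rw [Set.indicator_of_notMem hv, Set.indicator_of_notMem]
          intro hmem
          exact hv ⟨hmem.2.1, by have := hmem.2.2; dsimp at this; linarith⟩
      simp_rw [hsec]
      rw [integral_indicator measurableSet_Icc, integral_Icc_eq_integral_Ioc,
        ← intervalIntegral.integral_of_le (by linarith [hu.2] : (0:ℝ) ≤ 1 - u)]
    · rw [Set.indicator_of_notMem hu]
      have hz : ∀ v : ℝ, Tri.indicator g (u, v) = 0 := by
        intro v
        rw [Set.indicator_of_notMem]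
        intro hmem
        obtain ⟨m1, m2, m3⟩ := hmem
        simp only [Set.mem_Icc, not_and_or, not_le] at hu
        dsimp at m1 m2 m3
        rcases hu with hu | hu <;> linarith
      simp_rw [hz, integral_zero]
  calc (∫ u : ℝ, ∫ v : ℝ, Tri.indicator g (u, v))
      = ∫ u : ℝ, (Set.Icc (0:ℝ) 1).indicator (fun u' => ∫ v in (0:ℝ)..(1-u'), g (u', v)) u :=
        integral_congr_ae (Filter.Eventually.of_forall key)
    _ = ∫ u in Set.Icc (0:ℝ) 1, ∫ v in (0:ℝ)..(1-u), g (u, v) :=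
        integral_indicator measurableSet_Icc
    _ = ∫ u in Set.Ioc (0:ℝ) 1, ∫ v in (0:ℝ)..(1-u), g (u, v) := integral_Icc_eq_integral_Ioc
    _ = ∫ u in (0:ℝ)..1, ∫ v in (0:ℝ)..(1-u), g (u, v) :=
        (intervalIntegral.integral_of_le zero_le_one).symm

lemma tri_zero (al be ga : ℝ) :
    (∫ z in Tri, ((1 - z.1 - z.2) * z.1 * ((1 - z.1 - z.2) - 1/3)
      - (1 - z.1 - z.2) * z.2 * ((1 - z.1 - z.2) - 1/3)) * (al + be * z.1 + ga * z.2)) = 0 := by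
  rw [fubTri _ (by fun_prop)]
  have houter : ∀ u ∈ Set.uIcc (0:ℝ) 1,
      (∫ v in (0:ℝ)..(1-u), ((1 - u - v) * u * ((1 - u - v) - 1/3)
        - (1 - u - v) * v * ((1 - u - v) - 1/3)) * (al + be * u + ga * v))
      = ((-1/180)*ga + (-1/36)*al) + ((1/12)*ga + (-1/36)*be + (1/3)*al)*u
        + ((-1/3)*ga + (1/3)*be + (-1)*al)*u^2 + ((5/9)*ga + (-1)*be + (10/9)*al)*u^3
        + ((-5/12)*ga + (10/9)*be + (-5/12)*al)*u^4 + ((7/60)*ga + (-5/12)*be)*u^5 := by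
    intro u _
    rw [show (∫ v in (0:ℝ)..(1-u), ((1 - u - v) * u * ((1 - u - v) - 1/3)
        - (1 - u - v) * v * ((1 - u - v) - 1/3)) * (al + be * u + ga * v))
      = ∫ v in (0:ℝ)..(1-u),
        (((2/3)*u*al + (2/3)*u^2*be + (-5/3)*u^2*al + (-5/3)*u^3*be + u^3*al + u^4*be)
        + ((-2/3)*al + (2/3)*u*ga + (-2/3)*u*be + (-5/3)*u^2*ga + u^2*al + u^3*ga + u^3*be)*v
        + ((-2/3)*ga + (5/3)*al + (5/3)*u*be + (-1)*u*al + u^2*ga + (-1)*u^2*be)*v^2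
        + ((5/3)*ga + (-1)*al + (-1)*u*ga + (-1)*u*be)*v^3
        + ((-1)*ga)*v^4 + 0*v^5)
      from intervalIntegral.integral_congr (fun v _ => by ring)]
    rw [integral_poly5]
    ring
  rw [intervalIntegral.integral_congr houter, integral_poly5]
  ring

lemma tri_third (A B : ℝ) :
    (∫ z in Tri, (1 - z.1 - z.2) * ((1 - z.1 - z.2) - 1/3) * (A * z.1 + B * z.2)
      * (1 - z.1 - z.2)) = (A + B) / 360 := by
  rw [fubTri _ (by fun_prop)]
  have houter : ∀ u ∈ Set.uIcc (0:ℝ) 1,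
      (∫ v in (0:ℝ)..(1-u), (1 - u - v) * ((1 - u - v) - 1/3) * (A * u + B * v) * (1 - u - v))
      = ((1/45)*B) + ((-5/36)*B + (5/36)*A)*u + ((1/3)*B + (-2/3)*A)*u^2
        + ((-7/18)*B + (7/6)*A)*u^3 + ((2/9)*B + (-8/9)*A)*u^4
        + ((-1/20)*B + (1/4)*A)*u^5 := by
    intro u _
    rw [show (∫ v in (0:ℝ)..(1-u), (1 - u - v) * ((1 - u - v) - 1/3) * (A * u + B * v) * (1 - u - v))
      = ∫ v in (0:ℝ)..(1-u),
        (((2/3)*u*A + (-7/3)*u^2*A + (8/3)*u^3*A + (-1)*u^4*A)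
        + ((2/3)*B + (-7/3)*u*B + (-7/3)*u*A + (8/3)*u^2*B + (16/3)*u^2*A + (-1)*u^3*B + (-3)*u^3*A)*v
        + ((-7/3)*B + (16/3)*u*B + (8/3)*u*A + (-3)*u^2*B + (-3)*u^2*A)*v^2
        + ((8/3)*B + (-3)*u*B + (-1)*u*A)*v^3
        + ((-1)*B)*v^4 + 0*v^5)
      from intervalIntegral.integral_congr (fun v _ => by ring)]
    rw [integral_poly5]
    ring
  rw [intervalIntegral.integral_congr houter, integral_poly5]
  ring

lemma tri_one : (∫ z in Tri, (1:ℝ)) = 1/2 := by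
  rw [fubTri _ continuous_const]
  have houter : ∀ u ∈ Set.uIcc (0:ℝ) 1,
      (∫ v in (0:ℝ)..(1-u), (1:ℝ))
      = 1 + (-1)*u + 0*u^2 + 0*u^3 + 0*u^4 + 0*u^5 := by
    intro u _
    rw [show (∫ v in (0:ℝ)..(1-u), (1:ℝ))
      = ∫ v in (0:ℝ)..(1-u), ((1:ℝ) + 0*v + 0*v^2 + 0*v^3 + 0*v^4 + 0*v^5)
      from intervalIntegral.integral_congr (fun v _ => by ring)]
    rw [integral_poly5]
    ring
  rw [intervalIntegral.integral_congr houter, integral_poly5]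
  ring

lemma volume_Tri : (volume : Measure (ℝ × ℝ)) Tri = ENNReal.ofReal (1/2) := by
  have h := tri_one
  rw [setIntegral_const, smul_eq_mul, mul_one] at h
  rw [← ENNReal.ofReal_toReal (isCompact_Tri.measure_lt_top.ne), ← measureReal_def, h]

lemma haff (h : (Fin 3 → ℝ) →ᵃ[ℝ] ℝ) (y0 y1 y2 : Fin 3 → ℝ) (z : ℝ × ℝ) :
    h (y0 + z.1 • (y1 - y0) + z.2 • (y2 - y0))
      = h y0 + z.1 * (h y1 - h y0) + z.2 * (h y2 - h y0) := by
  have e1 : y0 + z.1 • (y1 - y0) + z.2 • (y2 - y0)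
      = (z.1 • (y1 - y0) + z.2 • (y2 - y0)) +ᵥ y0 := by
    simp only [vadd_eq_add]; abel
  have l1 : h.linear (y1 - y0) = h y1 - h y0 := by
    have := h.linearMap_vsub y1 y0
    simpa [vsub_eq_sub] using this
  have l2 : h.linear (y2 - y0) = h y2 - h y0 := by
    have := h.linearMap_vsub y2 y0
    simpa [vsub_eq_sub] using this
  rw [e1, AffineMap.map_vadd, map_add, LinearMap.map_smul, LinearMap.map_smul, l1, l2]
  simp only [vadd_eq_add, smul_eq_mul]
  ring

/-- Change of variables: integration over a (possibly degenerate-free) triangle in `ℝ³`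
with respect to 2-dimensional Hausdorff measure reduces, up to a constant, to integration
over the reference triangle. -/
lemma face_integral (y0 y1 y2 : Fin 3 → ℝ)
    (hind : ∀ a b : ℝ, a • (y1 - y0) + b • (y2 - y0) = 0 → a = 0 ∧ b = 0) :
    ∃ c : NNReal,
      μH[2] (convexHull ℝ {y0, y1, y2}) = (c : ℝ≥0∞) * ENNReal.ofReal (1/2) ∧
      ∀ g : (Fin 3 → ℝ) → ℝ, Continuous g →
        (∫ p in convexHull ℝ {y0, y1, y2}, g p ∂μH[2])
          = (c : ℝ) * ∫ z in Tri, g (y0 + z.1 • (y1 - y0) + z.2 • (y2 - y0)) := by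
  classical
  set L : (ℝ × ℝ) →ₗ[ℝ] (Fin 3 → ℝ) :=
    LinearMap.coprod (LinearMap.toSpanSingleton ℝ _ (y1 - y0))
      (LinearMap.toSpanSingleton ℝ _ (y2 - y0)) with hLdef
  have hL : ∀ z : ℝ × ℝ, L z = z.1 • (y1 - y0) + z.2 • (y2 - y0) := by
    intro z
    simp [hLdef, LinearMap.toSpanSingleton_apply]
  have hLinj : Function.Injective L := by
    intro a b hab
    have h0 : L (a - b) = 0 := by rw [map_sub, hab, sub_self]
    rw [hL] at h0
    obtain ⟨h1, h2⟩ := hind _ _ h0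
    have hab0 : a - b = 0 := Prod.ext h1 h2
    exact sub_eq_zero.1 hab0
  set fa : (ℝ × ℝ) →ᵃ[ℝ] (Fin 3 → ℝ) :=
    { toFun := fun z => y0 + L z
      linear := L
      map_vadd' := by intro p v; simp only [vadd_eq_add, map_add]; abel } with hfadef
  have hfa : ∀ z, fa z = y0 + L z := fun _ => rfl
  have hfavec : ∀ z : ℝ × ℝ, fa z = y0 + z.1 • (y1 - y0) + z.2 • (y2 - y0) := by
    intro z; rw [hfa, hL, add_assoc]
  have hhull : ⇑fa '' Tri = convexHull ℝ {y0, y1, y2} := by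
    rw [← Tri_hull, AffineMap.image_convexHull]
    congr 1
    rw [Set.image_insert_eq, Set.image_insert_eq, Set.image_singleton]
    have e0 : fa ((0:ℝ), (0:ℝ)) = y0 := by rw [hfavec]; simp
    have e1 : fa ((1:ℝ), (0:ℝ)) = y1 := by rw [hfavec]; simp
    have e2 : fa ((0:ℝ), (1:ℝ)) = y2 := by rw [hfavec]; simp
    rw [e0, e1, e2]
  have hLce : IsClosedEmbedding ⇑L :=
    LinearMap.isClosedEmbedding_of_injective (LinearMap.ker_eq_bot.mpr hLinj)
  have hface : IsClosedEmbedding ⇑fa := by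
    have hcomp : ⇑fa = (fun p => y0 + p) ∘ ⇑L := funext fun z => hfa z
    rw [hcomp]
    exact (Homeomorph.addLeft y0).isClosedEmbedding.comp hLce
  have hemb : MeasurableEmbedding ⇑fa := hface.measurableEmbedding
  set ν : Measure (ℝ × ℝ) := Measure.comap (⇑fa) μH[2] with hνdef
  have hν : ∀ s : Set (ℝ × ℝ), ν s = μH[2] (⇑fa '' s) := fun s => hemb.comap_apply _ s
  haveI hinv : ν.IsAddLeftInvariant := by
    constructor
    intro t
    ext A hA
    rw [Measure.map_apply (measurable_const_add t) hA, hν, hν]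
    have hset : ⇑fa '' ((fun z => t + z) ⁻¹' A) = (fun p => -(L t) + p) '' (⇑fa '' A) := by
      rw [Set.image_image]
      ext p
      simp only [Set.mem_image, Set.mem_preimage]
      constructor
      · rintro ⟨z, hz, rfl⟩
        refine ⟨t + z, hz, ?_⟩
        rw [hfa, hfa, map_add]
        abel
      · rintro ⟨a, ha, rfl⟩
        refine ⟨a - t, by simpa using ha, ?_⟩
        rw [hfa, hfa, map_sub]
        abel
    rw [hset]
    have hiso : Isometry (fun p : Fin 3 → ℝ => -(L t) + p) :=
      Isometry.of_dist_eq fun a b => by simp [dist_add_left]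
    exact hiso.hausdorffMeasure_image (Or.inl (by norm_num)) _
  haveI hfinC : IsFiniteMeasureOnCompacts ν := by
    constructor
    intro K hK
    rw [hν]
    set Lc := LinearMap.toContinuousLinearMap L with hLcdef
    have hLc : ∀ z, Lc z = L z := fun _ => rfl
    have hlip : LipschitzWith ‖Lc‖₊ ⇑fa := by
      apply LipschitzWith.of_dist_le_mul
      intro a b
      have hd : dist (fa a) (fa b) = dist (Lc a) (Lc b) := by
        rw [hfa, hfa, hLc, hLc, dist_add_left]
      rw [hd]
      exact Lc.lipschitz.dist_le_mul a b
    calc μH[2] (⇑fa '' K) ≤ (‖Lc‖₊ : ℝ≥0∞) ^ (2:ℝ) * μH[2] K :=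
          hlip.hausdorffMeasure_image_le (by norm_num) K
      _ < ⊤ := by
          rw [hausdorffMeasure_prod_real]
          exact ENNReal.mul_lt_top
            (ENNReal.rpow_lt_top_of_nonneg (by norm_num) ENNReal.coe_ne_top)
            hK.measure_lt_top
  obtain ⟨κ, hκ⟩ : ∃ κ : ℝ≥0, ν = (κ : ℝ≥0∞) • (volume : Measure (ℝ × ℝ)) := by
    refine ⟨Measure.addHaarScalarFactor ν volume, ?_⟩
    have h := Measure.isAddLeftInvariant_eq_smul ν (volume : Measure (ℝ × ℝ))
    rw [ENNReal.smul_def] at h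
    exact h
  refine ⟨κ, ?_, ?_⟩
  · rw [← hhull, ← hν, hκ, Measure.smul_apply, volume_Tri, smul_eq_mul]
  · intro g hg
    rw [← hhull]
    have hrest : μH[2].restrict (⇑fa '' Tri) = Measure.map (⇑fa) (ν.restrict Tri) := by
      ext A hA
      rw [Measure.map_apply hemb.measurable hA, Measure.restrict_apply hA,
        Measure.restrict_apply (hemb.measurable hA), hν, Set.image_preimage_inter]
    rw [hrest, hemb.integral_map, hκ, Measure.restrict_smul, integral_smul_measure,
      ENNReal.coe_toReal, ← smul_eq_mul]
    congr 1
    exact setIntegral_congr_fun measurableSet_Tri (fun z _ => by rw [hfavec])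

end Stmt19Aux

end

open Stmt19Aux

/-- Moment cancellation: the combination `δ = δ_1 - r δ_2 + s δ_3` of matrix-valued
cubic bubbles has vanishing `P_1` normal-normal moments on the faces `F_3` and `F_1`,
while its `λ_0`-moment on `F_2` equals
`(n_2ᵀT_1n_2 + s·n_2ᵀT_3n_2)·|F_2|/180`. -/
theorem stmt19 (x : Fin 4 → Fin 3 → ℝ) (hx : AffineIndependent ℝ x)
    (lam : Fin 4 → ((Fin 3 → ℝ) →ᵃ[ℝ] ℝ))
    (hlam : ∀ i j, lam i (x j) = if i = j then 1 else 0)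
    (F : Fin 4 → Set (Fin 3 → ℝ))
    (hF : ∀ i, F i = convexHull ℝ (x '' {j | j ≠ i}))
    (nn : Fin 4 → Fin 3 → ℝ)
    (hnn : ∀ i, nn i ⬝ᵥ nn i = 1)
    (hperp : ∀ i j k : Fin 4, j ≠ i → k ≠ i → nn i ⬝ᵥ (x j - x k) = 0)
    (T1 T2 T3 : Matrix (Fin 3) (Fin 3) ℝ)
    (hT1 : T1.IsSymm) (hT2 : T2.IsSymm) (hT3 : T3.IsSymm)
    (h2ne : nn 3 ⬝ᵥ (T2 *ᵥ nn 3) ≠ 0) (h3ne : nn 1 ⬝ᵥ (T3 *ᵥ nn 1) ≠ 0)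
    (r s : ℝ)
    (hr : r = (nn 3 ⬝ᵥ (T1 *ᵥ nn 3)) / (nn 3 ⬝ᵥ (T2 *ᵥ nn 3)))
    (hs : s = r * (nn 1 ⬝ᵥ (T2 *ᵥ nn 1)) / (nn 1 ⬝ᵥ (T3 *ᵥ nn 1)))
    (δ : (Fin 3 → ℝ) → Matrix (Fin 3) (Fin 3) ℝ)
    (hδ : ∀ p, δ p = (lam 0 p * lam 1 p * (lam 0 p - 1 / 3)) • T1
        - (r * (lam 0 p * lam 2 p * (lam 0 p - 1 / 3))) • T2
        + (s * (lam 0 p * lam 3 p * (lam 0 p - 1 / 3))) • T3) :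
    (∀ q : (Fin 3 → ℝ) →ᵃ[ℝ] ℝ,
        (∫ p in F 3, (nn 3 ⬝ᵥ (δ p *ᵥ nn 3)) * q p ∂μH[2]) = 0) ∧
    (∀ q : (Fin 3 → ℝ) →ᵃ[ℝ] ℝ,
        (∫ p in F 1, (nn 1 ⬝ᵥ (δ p *ᵥ nn 1)) * q p ∂μH[2]) = 0) ∧
    (∫ p in F 2, (nn 2 ⬝ᵥ (δ p *ᵥ nn 2)) * lam 0 p ∂μH[2])
      = (nn 2 ⬝ᵥ (T1 *ᵥ nn 2) + s * (nn 2 ⬝ᵥ (T3 *ᵥ nn 2))) * (μH[2] (F 2)).toReal / 180 := by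
  have hcont : ∀ i : Fin 4, Continuous fun p : Fin 3 → ℝ => lam i p :=
    fun i => (lam i).continuous_of_finiteDimensional
  have hscal : ∀ (w p : Fin 3 → ℝ), w ⬝ᵥ (δ p *ᵥ w)
      = (lam 0 p * lam 1 p * (lam 0 p - 1/3)) * (w ⬝ᵥ (T1 *ᵥ w))
        - (r * (lam 0 p * lam 2 p * (lam 0 p - 1/3))) * (w ⬝ᵥ (T2 *ᵥ w))
        + (s * (lam 0 p * lam 3 p * (lam 0 p - 1/3))) * (w ⬝ᵥ (T3 *ᵥ w)) := by
    intro w p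
    rw [hδ p]
    simp only [Matrix.add_mulVec, Matrix.sub_mulVec, Matrix.smul_mulVec,
      dotProduct_add, dotProduct_sub, dotProduct_smul, smul_eq_mul]
  have hδcont : ∀ w : Fin 3 → ℝ, Continuous fun p => w ⬝ᵥ (δ p *ᵥ w) := by
    intro w
    have hrw : (fun p => w ⬝ᵥ (δ p *ᵥ w)) = fun p =>
        (lam 0 p * lam 1 p * (lam 0 p - 1/3)) * (w ⬝ᵥ (T1 *ᵥ w))
        - (r * (lam 0 p * lam 2 p * (lam 0 p - 1/3))) * (w ⬝ᵥ (T2 *ᵥ w))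
        + (s * (lam 0 p * lam 3 p * (lam 0 p - 1/3))) * (w ⬝ᵥ (T3 *ᵥ w)) :=
      funext (hscal w)
    rw [hrw]
    have h0 := hcont 0
    have h1 := hcont 1
    have h2 := hcont 2
    have h3 := hcont 3
    fun_prop
  have hpair : ∀ a b : Fin 4, a ≠ 0 → b ≠ 0 → a ≠ b →
      ∀ α β : ℝ, α • (x a - x 0) + β • (x b - x 0) = 0 → α = 0 ∧ β = 0 := by
    intro a b ha hb hab α β h
    have hli := (affineIndependent_iff_linearIndependent_vsub ℝ x 0).1 hx
    have hinj : Function.Injective (![⟨a, ha⟩, ⟨b, hb⟩] : Fin 2 → {i : Fin 4 // i ≠ 0}) := by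
      intro i j hij
      fin_cases i <;> fin_cases j <;> simp_all [Subtype.ext_iff]
    have h2 := hli.comp _ hinj
    have h3 : ((fun i : {i : Fin 4 // i ≠ (0 : Fin 4)} => x ↑i -ᵥ x 0)
        ∘ ![⟨a, ha⟩, ⟨b, hb⟩]) = ![x a - x 0, x b - x 0] := by
      funext i
      fin_cases i <;> simp [vsub_eq_sub]
    rw [h3] at h2
    exact h2.eq_zero_of_pair h
  refine ⟨?_, ?_, ?_⟩
  · -- face F_3
    intro q
    have him : x '' {j : Fin 4 | j ≠ 3} = {x 0, x 1, x 2} := by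
      have hset : {j : Fin 4 | j ≠ 3} = ({0, 1, 2} : Set (Fin 4)) := by
        ext j; fin_cases j <;> simp <;> decide
      rw [hset, Set.image_insert_eq, Set.image_insert_eq, Set.image_singleton]
    obtain ⟨c, hcμ, hcint⟩ := face_integral (x 0) (x 1) (x 2)
      (hpair 1 2 (by decide) (by decide) (by decide))
    have hgc : Continuous fun p => (nn 3 ⬝ᵥ (δ p *ᵥ nn 3)) * q p :=
      (hδcont (nn 3)).mul q.continuous_of_finiteDimensional
    rw [hF 3, him, hcint _ hgc]
    have hrt : r * (nn 3 ⬝ᵥ (T2 *ᵥ nn 3)) = nn 3 ⬝ᵥ (T1 *ᵥ nn 3) := by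
      rw [hr, div_mul_cancel₀ _ h2ne]
    have h1 : (∫ z in Tri, (fun p => (nn 3 ⬝ᵥ (δ p *ᵥ nn 3)) * q p)
          (x 0 + z.1 • (x 1 - x 0) + z.2 • (x 2 - x 0)))
        = ∫ z in Tri, (nn 3 ⬝ᵥ (T1 *ᵥ nn 3)) *
            (((1 - z.1 - z.2) * z.1 * ((1 - z.1 - z.2) - 1/3)
              - (1 - z.1 - z.2) * z.2 * ((1 - z.1 - z.2) - 1/3))
            * (q (x 0) + (q (x 1) - q (x 0)) * z.1 + (q (x 2) - q (x 0)) * z.2)) := by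
      refine setIntegral_congr_fun measurableSet_Tri (fun z _ => ?_)
      show (nn 3 ⬝ᵥ (δ (x 0 + z.1 • (x 1 - x 0) + z.2 • (x 2 - x 0)) *ᵥ nn 3))
          * q (x 0 + z.1 • (x 1 - x 0) + z.2 • (x 2 - x 0)) = _
      rw [hscal (nn 3), haff q, haff (lam 0), haff (lam 1), haff (lam 2), haff (lam 3)]
      simp only [hlam, Fin.reduceEq, reduceIte]
      linear_combination (-((1 - z.1 - z.2) * z.2 * ((1 - z.1 - z.2) - 1/3)
        * (q (x 0) + (q (x 1) - q (x 0)) * z.1 + (q (x 2) - q (x 0)) * z.2))) * hrt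
    rw [h1, integral_const_mul, tri_zero, mul_zero, mul_zero]
  · -- face F_1
    intro q
    have him : x '' {j : Fin 4 | j ≠ 1} = {x 0, x 2, x 3} := by
      have hset : {j : Fin 4 | j ≠ 1} = ({0, 2, 3} : Set (Fin 4)) := by
        ext j; fin_cases j <;> simp <;> decide
      rw [hset, Set.image_insert_eq, Set.image_insert_eq, Set.image_singleton]
    obtain ⟨c, hcμ, hcint⟩ := face_integral (x 0) (x 2) (x 3)
      (hpair 2 3 (by decide) (by decide) (by decide))
    have hgc : Continuous fun p => (nn 1 ⬝ᵥ (δ p *ᵥ nn 1)) * q p :=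
      (hδcont (nn 1)).mul q.continuous_of_finiteDimensional
    rw [hF 1, him, hcint _ hgc]
    have hst : s * (nn 1 ⬝ᵥ (T3 *ᵥ nn 1)) = r * (nn 1 ⬝ᵥ (T2 *ᵥ nn 1)) := by
      rw [hs, div_mul_cancel₀ _ h3ne]
    have h1 : (∫ z in Tri, (fun p => (nn 1 ⬝ᵥ (δ p *ᵥ nn 1)) * q p)
          (x 0 + z.1 • (x 2 - x 0) + z.2 • (x 3 - x 0)))
        = ∫ z in Tri, (-(r * (nn 1 ⬝ᵥ (T2 *ᵥ nn 1)))) *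
            (((1 - z.1 - z.2) * z.1 * ((1 - z.1 - z.2) - 1/3)
              - (1 - z.1 - z.2) * z.2 * ((1 - z.1 - z.2) - 1/3))
            * (q (x 0) + (q (x 2) - q (x 0)) * z.1 + (q (x 3) - q (x 0)) * z.2)) := by
      refine setIntegral_congr_fun measurableSet_Tri (fun z _ => ?_)
      show (nn 1 ⬝ᵥ (δ (x 0 + z.1 • (x 2 - x 0) + z.2 • (x 3 - x 0)) *ᵥ nn 1))
          * q (x 0 + z.1 • (x 2 - x 0) + z.2 • (x 3 - x 0)) = _
      rw [hscal (nn 1), haff q, haff (lam 0), haff (lam 1), haff (lam 2), haff (lam 3)]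
      simp only [hlam, Fin.reduceEq, reduceIte]
      linear_combination ((1 - z.1 - z.2) * z.2 * ((1 - z.1 - z.2) - 1/3)
        * (q (x 0) + (q (x 2) - q (x 0)) * z.1 + (q (x 3) - q (x 0)) * z.2)) * hst
    rw [h1, integral_const_mul, tri_zero, mul_zero, mul_zero]
  · -- face F_2
    have him : x '' {j : Fin 4 | j ≠ 2} = {x 0, x 1, x 3} := by
      have hset : {j : Fin 4 | j ≠ 2} = ({0, 1, 3} : Set (Fin 4)) := by
        ext j; fin_cases j <;> simp <;> decide
      rw [hset, Set.image_insert_eq, Set.image_insert_eq, Set.image_singleton]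
    obtain ⟨c, hcμ, hcint⟩ := face_integral (x 0) (x 1) (x 3)
      (hpair 1 3 (by decide) (by decide) (by decide))
    have hgc : Continuous fun p => (nn 2 ⬝ᵥ (δ p *ᵥ nn 2)) * lam 0 p :=
      (hδcont (nn 2)).mul (hcont 0)
    rw [hF 2, him, hcint _ hgc]
    have h1 : (∫ z in Tri, (fun p => (nn 2 ⬝ᵥ (δ p *ᵥ nn 2)) * lam 0 p)
          (x 0 + z.1 • (x 1 - x 0) + z.2 • (x 3 - x 0)))
        = ∫ z in Tri, (1 - z.1 - z.2) * ((1 - z.1 - z.2) - 1/3)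
            * ((nn 2 ⬝ᵥ (T1 *ᵥ nn 2)) * z.1 + (s * (nn 2 ⬝ᵥ (T3 *ᵥ nn 2))) * z.2)
            * (1 - z.1 - z.2) := by
      refine setIntegral_congr_fun measurableSet_Tri (fun z _ => ?_)
      show (nn 2 ⬝ᵥ (δ (x 0 + z.1 • (x 1 - x 0) + z.2 • (x 3 - x 0)) *ᵥ nn 2))
          * lam 0 (x 0 + z.1 • (x 1 - x 0) + z.2 • (x 3 - x 0)) = _
      rw [hscal (nn 2), haff (lam 0), haff (lam 1), haff (lam 2), haff (lam 3)]
      simp only [hlam, Fin.reduceEq, reduceIte]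
      ring
    rw [h1, tri_third, hcμ, ENNReal.toReal_mul, ENNReal.coe_toReal,
      ENNReal.toReal_ofReal (by norm_num)]
    ring
end
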